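/- For G₂ = (τ+a)^{−n/2} exp(−(h−ρ)²/(4(τ+a))) on a shrinker background (with h as in the weight lemma), the conjugate-heat defect satisfies G₂^{−1}(∂_τ G₂ − ∆G₂) + R = −(n−1)ρ/(2h(τ+a)) + a²R/(τ+a)² + (2τρR/(h(τ+a)))·(a/(τ+a) + ρτ/(2h(τ+a)) − τ/h²). -/

import Mathlib

/-- For `G₂ = (τ+a)^{−n/2} exp(−(h−ρ)²/(4(τ+a)))` on a shrinker background
(with `h` as in the weight lemma: `∂_τh = 2τR/h`, `|∇h|² = 1 − 4τ²R/h²`,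
`h∆h = n − 2τR − |∇h|²`), the conjugate-heat defect satisfies
`G₂⁻¹(∂_τG₂ − ∆G₂) + R = −(n−1)ρ/(2h(τ+a)) + a²R/(τ+a)²
  + (2τρR/(h(τ+a)))·(a/(τ+a) + ρτ/(2h(τ+a)) − τ/h²)`.

Encoding: quantities along the time axis at a fixed point; `gradSq = |∇h|²`,
`lapH = ∆h`, and `LapG = ∆G₂` given by the (metric-independent) chain rule
`∆G₂ = (∂_hG₂)∆h + (∂²_hG₂)|∇h|²`. -/
theorem stmt18 (n : ℕ) (a ρ τ₀ : ℝ) (ha : a ∈ Set.Ioo (0:ℝ) 1) (hρ : 0 < ρ)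
    (hτ₀ : 0 < τ₀)
    (h R gradSq lapH LapG : ℝ → ℝ)
    (hpos : ∀ τ ∈ Set.Ioc 0 τ₀, 0 < h τ)
    (hdh : ∀ τ ∈ Set.Ioc 0 τ₀, HasDerivAt h (2 * τ * R τ / h τ) τ)
    (hgs : ∀ τ ∈ Set.Ioc 0 τ₀, gradSq τ = 1 - 4 * τ ^ 2 * R τ / (h τ) ^ 2)
    (hlap : ∀ τ ∈ Set.Ioc 0 τ₀, h τ * lapH τ = n - 2 * τ * R τ - gradSq τ)
    (hchain : ∀ τ ∈ Set.Ioc 0 τ₀,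
      LapG τ = ((τ + a) ^ (-(n:ℝ) / 2) * Real.exp (-(h τ - ρ) ^ 2 / (4 * (τ + a)))) *
        (-((h τ - ρ) / (2 * (τ + a))) * lapH τ
          + ((h τ - ρ) ^ 2 / (4 * (τ + a) ^ 2) - 1 / (2 * (τ + a))) * gradSq τ)) :
    ∀ τ ∈ Set.Ioc 0 τ₀,
      ((τ + a) ^ (-(n:ℝ) / 2) * Real.exp (-(h τ - ρ) ^ 2 / (4 * (τ + a))))⁻¹ *
          (deriv (fun t => (t + a) ^ (-(n:ℝ) / 2)
              * Real.exp (-(h t - ρ) ^ 2 / (4 * (t + a)))) τ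
            - LapG τ) + R τ
        = -((n:ℝ) - 1) * ρ / (2 * h τ * (τ + a)) + a ^ 2 * R τ / (τ + a) ^ 2
          + (2 * τ * ρ * R τ / (h τ * (τ + a))) *
              (a / (τ + a) + ρ * τ / (2 * h τ * (τ + a)) - τ / (h τ) ^ 2) := by
  intro τ hτ
  obtain ⟨hτ0, hττ⟩ := hτ
  have hta : (0:ℝ) < τ + a := by linarith [ha.1]
  have hh := hpos τ ⟨hτ0, hττ⟩
  have hd := hdh τ ⟨hτ0, hττ⟩
  have hP : HasDerivAt (fun t : ℝ => (t + a) ^ (-(n:ℝ) / 2))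
      (-(n:ℝ) / 2 * (τ + a) ^ (-(n:ℝ) / 2 - 1)) τ := by
    have h1 : HasDerivAt (fun t : ℝ => t + a) 1 τ := (hasDerivAt_id τ).add_const a
    have := h1.rpow_const (p := -(n:ℝ) / 2) (Or.inl hta.ne')
    simpa using this
  have hu : HasDerivAt (fun t => -(h t - ρ) ^ 2)
      (-(2 * (h τ - ρ) * (2 * τ * R τ / h τ))) τ := by
    have : HasDerivAt (fun t => -(h t - ρ) ^ 2) _ τ := ((hd.sub_const ρ).pow 2).neg
    convert this using 1
    ring
  have hv : HasDerivAt (fun t : ℝ => 4 * (t + a)) 4 τ := by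
    simpa using ((hasDerivAt_id τ).add_const a).const_mul 4
  have hv0 : (4 : ℝ) * (τ + a) ≠ 0 := by positivity
  have hq : HasDerivAt (fun t => -(h t - ρ) ^ 2 / (4 * (t + a)))
      ((-(2 * (h τ - ρ) * (2 * τ * R τ / h τ)) * (4 * (τ + a)) -
        (-(h τ - ρ) ^ 2) * 4) / (4 * (τ + a)) ^ 2) τ := hu.div hv hv0
  have hE : HasDerivAt (fun t => Real.exp (-(h t - ρ) ^ 2 / (4 * (t + a))))
      (Real.exp (-(h τ - ρ) ^ 2 / (4 * (τ + a))) *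
        ((-(2 * (h τ - ρ) * (2 * τ * R τ / h τ)) * (4 * (τ + a)) -
        (-(h τ - ρ) ^ 2) * 4) / (4 * (τ + a)) ^ 2)) τ := hq.exp
  have hderiv : deriv (fun t => (t + a) ^ (-(n:ℝ) / 2)
      * Real.exp (-(h t - ρ) ^ 2 / (4 * (t + a)))) τ = _ := (hP.mul hE).deriv
  rw [hderiv, hchain τ ⟨hτ0, hττ⟩, hgs τ ⟨hτ0, hττ⟩]
  have hlapH : lapH τ = ((n : ℝ) - 2 * τ * R τ - gradSq τ) / h τ := by
    rw [eq_div_iff hh.ne']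
    have := hlap τ ⟨hτ0, hττ⟩
    linarith
  rw [hlapH, hgs τ ⟨hτ0, hττ⟩]
  have hpow : (τ + a) ^ (-(n:ℝ) / 2 - 1) = (τ + a) ^ (-(n:ℝ) / 2) / (τ + a) := by
    rw [Real.rpow_sub hta, Real.rpow_one]
  rw [hpow]
  have hP0 : (τ + a) ^ (-(n:ℝ) / 2) ≠ 0 := (Real.rpow_pos_of_pos hta _).ne'
  have hE0 : Real.exp (-(h τ - ρ) ^ 2 / (4 * (τ + a))) ≠ 0 := Real.exp_ne_zero _
  field_simp
  ring
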